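/- For the rigid body with time delay in all directions, ẋ¹(t) = a₂x²(t)x³(t−τ) − a₃x³(t)x²(t−τ), ẋ²(t) = a₃x³(t)x¹(t−τ) − a₁x¹(t)x³(t−τ), ẋ³(t) = a₁x¹(t)x²(t−τ) − a₂x²(t)x¹(t−τ), the function h₂(x) = ½(a₁(x¹)² + a₂(x²)² + a₃(x³)²) is a first integral: d/dt h₂(x(t)) = 0 for every differentiable solution x : ℝ → ℝ³ and τ ≥ 0. -/

import Mathlib

/-- For the rigid body with time delay in all directions,
`ẋ¹(t) = a₂x²(t)x³(t-τ) - a₃x³(t)x²(t-τ)`,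
`ẋ²(t) = a₃x³(t)x¹(t-τ) - a₁x¹(t)x³(t-τ)`,
`ẋ³(t) = a₁x¹(t)x²(t-τ) - a₂x²(t)x¹(t-τ)`,
the function `h₂(x) = ½(a₁(x¹)² + a₂(x²)² + a₃(x³)²)` is a first integral. -/
theorem stmt15 (a₁ a₂ a₃ τ : ℝ) (hτ : 0 ≤ τ) (x₁ x₂ x₃ : ℝ → ℝ)
    (hx₁ : ∀ t, HasDerivAt x₁ (a₂ * x₂ t * x₃ (t - τ) - a₃ * x₃ t * x₂ (t - τ)) t)
    (hx₂ : ∀ t, HasDerivAt x₂ (a₃ * x₃ t * x₁ (t - τ) - a₁ * x₁ t * x₃ (t - τ)) t)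
    (hx₃ : ∀ t, HasDerivAt x₃ (a₁ * x₁ t * x₂ (t - τ) - a₂ * x₂ t * x₁ (t - τ)) t) :
    ∀ t, HasDerivAt
      (fun t => (1/2) * (a₁ * (x₁ t)^2 + a₂ * (x₂ t)^2 + a₃ * (x₃ t)^2)) 0 t := by
  intro t
  have h := ((((hx₁ t).pow 2).const_mul a₁).add (((hx₂ t).pow 2).const_mul a₂) |>.add
      (((hx₃ t).pow 2).const_mul a₃)).const_mul (1/2 : ℝ)
  convert h using 1
  all_goals (try rfl)
  norm_num
  ring
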